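/- Consider the greedy spanner process on a graph G = (V, E) with |V| = n: initialize H = (V, ∅); process edges (u,v) ∈ E in arbitrary order, adding (u,v) to H whenever the current distance between u and v in H (number of edges) exceeds 2 log₂ n. Then the resulting H has girth greater than 2 log₂ n, and for every edge (u,v) ∈ E, dist_H(u,v) ≤ 2 log₂ n (so H is a (2 log₂ n)-spanner of the unweighted graph G). -/

import Mathlib

open SimpleGraph Walk


open SimpleGraph Walk

lemma length_rotate' {V : Type*} [DecidableEq V] {G : SimpleGraph V} {u v : V} (c : G.Walk v v)
    (h : u ∈ c.support) : (c.rotate u h).length = c.length := by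
  simp only [Walk.rotate, Walk.length_append]
  rw [Nat.add_comm, ← Walk.length_append, Walk.take_spec]

lemma path_last_edge {V : Type*} {G : SimpleGraph V} {b u v : V} (q : G.Walk b u)
    (hq : q.IsPath) (he : s(u, v) ∈ q.edges) :
    ∃ (h : G.Adj v u) (p : G.Walk b v), q = p.concat h := by
  induction q with
  | nil => simp at he
  | @cons b x u h r ih =>
    rw [Walk.cons_isPath_iff] at hq
    rw [Walk.edges_cons, List.mem_cons] at he
    rcases he with he | he
    · rw [Sym2.eq_iff] at he
      rcases he with ⟨hub, hvx⟩ | ⟨hux, hvb⟩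
      · exact absurd (hub ▸ r.end_mem_support) hq.2
      · subst hux; subst hvb
        have hr : r = Walk.nil := by
          cases r with
          | nil => rfl
          | cons h' r' =>
            rw [Walk.cons_isPath_iff] at hq
            exact absurd r'.end_mem_support hq.1.2
        subst hr
        exact ⟨h, Walk.nil, by simp [Walk.concat]⟩
    · obtain ⟨h', p, hp⟩ := ih hq.1 he
      exact ⟨h', Walk.cons h p, by rw [hp, Walk.concat_cons]⟩

lemma cycle_split {V : Type*} {G : SimpleGraph V} {u v : V} (c : G.Walk u u)
    (hc : c.IsCycle) (he : s(u, v) ∈ c.edges) :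
    ∃ p : G.Walk u v, p.length + 1 = c.length ∧ s(u, v) ∉ p.edges := by
  cases c with
  | nil => simp at he
  | @cons _ x _ h q =>
    rw [Walk.cons_isCycle_iff] at hc
    rw [Walk.edges_cons, List.mem_cons] at he
    by_cases heq : s(u, v) = s(u, x)
    · rw [Sym2.eq_iff] at heq
      rcases heq with ⟨-, hvx⟩ | ⟨hux, hvu⟩
      · subst hvx
        refine ⟨q.reverse, by simp, ?_⟩
        rw [Walk.edges_reverse, List.mem_reverse]
        exact hc.2
      · exact absurd (hux ▸ h) (G.loopless.irrefl u)
    · have he' : s(u, v) ∈ q.edges := by tauto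
      obtain ⟨h', p, hp⟩ := path_last_edge q hc.1 he'
      refine ⟨Walk.cons h p, ?_, ?_⟩
      · rw [Walk.length_cons, Walk.length_cons, hp, Walk.length_concat]
      · rw [Walk.edges_cons, List.mem_cons]
        rintro (h1 | h2)
        · exact heq h1
        · have hnd := hc.1.isTrail.edges_nodup
          rw [hp, Walk.edges_concat, List.concat_eq_append, List.nodup_append'] at hnd
          exact hnd.2.2 h2 (by rw [Sym2.eq_swap]; exact List.mem_singleton_self _)


open Classical in
/-- One step of the greedy spanner process: add the edge `(p.1, p.2)` to `H` iff the
current hop distance between its endpoints in `H` exceeds `2 log₂ n` (i.e., every walk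
between them is longer than `2 log₂ n`; in particular if they are disconnected). -/
noncomputable def greedyStep {V : Type*} (n : ℕ) (H : SimpleGraph V) (p : V × V) :
    SimpleGraph V :=
  if ∀ w : H.Walk p.1 p.2, 2 * Real.logb 2 n < (w.length : ℝ) then
    H ⊔ SimpleGraph.fromEdgeSet {s(p.1, p.2)}
  else H

/-- The greedy spanner obtained by processing the list of edges `l` in order, starting
from the empty graph. -/
noncomputable def greedySpanner {V : Type*} (n : ℕ) (l : List (V × V)) : SimpleGraph V :=
  l.foldl (greedyStep n) ⊥


lemma step_le_self {V : Type*} (n : ℕ) (H : SimpleGraph V) (p : V × V) :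
    H ≤ greedyStep n H p := by
  rw [greedyStep]; split_ifs
  · exact le_sup_left
  · exact le_rfl

lemma step_le_G {V : Type*} {n : ℕ} {H G : SimpleGraph V} {p : V × V}
    (hG : H ≤ G) (hadj : G.Adj p.1 p.2) : greedyStep n H p ≤ G := by
  rw [greedyStep]; split_ifs
  · refine sup_le hG ?_
    intro a b hab
    rw [SimpleGraph.fromEdgeSet_adj, Set.mem_singleton_iff, Sym2.eq_iff] at hab
    rcases hab.1 with ⟨ha, hb⟩ | ⟨ha, hb⟩
    · rw [ha, hb]; exact hadj
    · rw [ha, hb]; exact hadj.symm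
  · exact hG

lemma sup_cycles {V : Type*} {n : ℕ} {H : SimpleGraph V} {u v : V}
    (hcond : ∀ w : H.Walk u v, 2 * Real.logb 2 n < (w.length : ℝ))
    (hcyc : ∀ (a : V) (c : H.Walk a a), c.IsCycle → 2 * Real.logb 2 n < (c.length : ℝ)) :
    ∀ (a : V) (c : (H ⊔ SimpleGraph.fromEdgeSet {s(u, v)}).Walk a a), c.IsCycle →
      2 * Real.logb 2 n < (c.length : ℝ) := by
  classical
  intro a c hc
  have hedge : ∀ e ∈ c.edges, e ∈ H.edgeSet ∨ e = s(u, v) := by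
    intro e he
    have := c.edges_subset_edgeSet he
    rw [SimpleGraph.edgeSet_sup, SimpleGraph.edgeSet_fromEdgeSet] at this
    rcases this with h1 | h2
    · exact Or.inl h1
    · exact Or.inr h2.1
  by_cases hmem : s(u, v) ∈ c.edges
  · have hu : u ∈ c.support := c.fst_mem_support_of_mem_edges hmem
    have hc'cyc : (c.rotate u hu).IsCycle := hc.rotate hu
    have hmem' : s(u, v) ∈ (c.rotate u hu).edges := by
      rw [(c.rotate_edges u hu).mem_iff]; exact hmem
    obtain ⟨q, hqlen, hqe⟩ := cycle_split (c.rotate u hu) hc'cyc hmem'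
    have hq : ∀ e ∈ q.edges, e ∈ H.edgeSet := by
      intro e he
      have h0 := q.edges_subset_edgeSet he
      rw [SimpleGraph.edgeSet_sup, SimpleGraph.edgeSet_fromEdgeSet] at h0
      rcases h0 with h1 | h2
      · exact h1
      · exact absurd (h2.1 ▸ he) hqe
    have := hcond (q.transfer H hq)
    rw [Walk.length_transfer] at this
    have hlen : (c.length : ℝ) = q.length + 1 := by
      rw [← length_rotate' c hu, ← hqlen]; push_cast; ring
    rw [hlen]
    linarith
  · have hq : ∀ e ∈ c.edges, e ∈ H.edgeSet := by
      intro e he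
      rcases hedge e he with h1 | h2
      · exact h1
      · exact absurd (h2 ▸ he) hmem
    have := hcyc a (c.transfer H hq) (hc.transfer hq)
    rwa [Walk.length_transfer] at this

lemma step_cycles {V : Type*} {n : ℕ} {H : SimpleGraph V} {p : V × V}
    (hcyc : ∀ (a : V) (c : H.Walk a a), c.IsCycle → 2 * Real.logb 2 n < (c.length : ℝ)) :
    ∀ (a : V) (c : (greedyStep n H p).Walk a a), c.IsCycle →
      2 * Real.logb 2 n < (c.length : ℝ) := by
  by_cases hcond : ∀ w : H.Walk p.1 p.2, 2 * Real.logb 2 n < (w.length : ℝ)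
  · rw [greedyStep, if_pos hcond]
    exact sup_cycles hcond hcyc
  · rw [greedyStep, if_neg hcond]
    exact hcyc

lemma step_short {V : Type*} {n : ℕ} {H G : SimpleGraph V} {p : V × V}
    (hadj : G.Adj p.1 p.2)
    (hone : (1 : ℝ) ≤ 2 * Real.logb 2 n) :
    ∃ w : (greedyStep n H p).Walk p.1 p.2, (w.length : ℝ) ≤ 2 * Real.logb 2 n := by
  by_cases hcond : ∀ w : H.Walk p.1 p.2, 2 * Real.logb 2 n < (w.length : ℝ)
  · rw [greedyStep, if_pos hcond]
    have hA : (H ⊔ SimpleGraph.fromEdgeSet {s(p.1, p.2)}).Adj p.1 p.2 := by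
      apply (SimpleGraph.sup_adj ..).mpr
      right
      rw [SimpleGraph.fromEdgeSet_adj]
      exact ⟨rfl, hadj.ne⟩
    exact ⟨Walk.cons hA Walk.nil, by simpa using hone⟩
  · rw [greedyStep, if_neg hcond]
    push_neg at hcond
    obtain ⟨w, hw⟩ := hcond
    exact ⟨w, hw⟩

lemma fold_main {V : Type*} (n : ℕ) (G : SimpleGraph V)
    (hone : ∀ u v : V, G.Adj u v → (1 : ℝ) ≤ 2 * Real.logb 2 n) :
    ∀ (l : List (V × V)) (H₀ : SimpleGraph V), (∀ p ∈ l, G.Adj p.1 p.2) → H₀ ≤ G →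
    (∀ (a : V) (c : H₀.Walk a a), c.IsCycle → 2 * Real.logb 2 n < (c.length : ℝ)) →
    H₀ ≤ l.foldl (greedyStep n) H₀ ∧ l.foldl (greedyStep n) H₀ ≤ G ∧
    (∀ (a : V) (c : (l.foldl (greedyStep n) H₀).Walk a a), c.IsCycle →
      2 * Real.logb 2 n < (c.length : ℝ)) ∧
    (∀ p ∈ l, ∃ w : (l.foldl (greedyStep n) H₀).Walk p.1 p.2,
      (w.length : ℝ) ≤ 2 * Real.logb 2 n) := by
  intro l
  induction l with
  | nil =>
    intro H₀ _ hG hcyc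
    exact ⟨le_rfl, hG, hcyc, by simp⟩
  | cons p l ih =>
    intro H₀ hal hG hcyc
    have hadj : G.Adj p.1 p.2 := hal p (by simp)
    have hal' : ∀ q ∈ l, G.Adj q.1 q.2 := fun q hq => hal q (by simp [hq])
    have h01 : H₀ ≤ greedyStep n H₀ p := step_le_self n H₀ p
    have h1G : greedyStep n H₀ p ≤ G := step_le_G hG hadj
    have h1cyc := step_cycles (n := n) (p := p) hcyc
    obtain ⟨hle, hfG, hfcyc, hshort⟩ := ih (greedyStep n H₀ p) hal' h1G h1cyc
    rw [List.foldl_cons]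
    refine ⟨le_trans h01 hle, hfG, hfcyc, ?_⟩
    intro q hq
    rcases List.mem_cons.mp hq with heq | hq'
    · subst heq
      obtain ⟨w, hw⟩ := step_short (n := n) (H := H₀) hadj (hone q.1 q.2 hadj)
      exact ⟨w.mapLe hle, by simpa using hw⟩
    · exact hshort q hq'

/-- The greedy spanner process on `G` (processing all edges of `G` in an arbitrary order)
produces a subgraph `H ≤ G` of girth greater than `2 log₂ n` in which every edge `(u,v)`
of `G` has hop distance at most `2 log₂ n`, i.e. a `(2 log₂ n)`-spanner of `G`. -/
theorem stmt_4 {V : Type*} [Fintype V] (G : SimpleGraph V) (l : List (V × V))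
    (hl : ∀ p ∈ l, G.Adj p.1 p.2)
    (hcover : ∀ u v, G.Adj u v → (u, v) ∈ l ∨ (v, u) ∈ l) :
    greedySpanner (Fintype.card V) l ≤ G ∧
    (∀ (v : V) (c : (greedySpanner (Fintype.card V) l).Walk v v), c.IsCycle →
      2 * Real.logb 2 (Fintype.card V) < (c.length : ℝ)) ∧
    (∀ u v, G.Adj u v → ∃ w : (greedySpanner (Fintype.card V) l).Walk u v,
      (w.length : ℝ) ≤ 2 * Real.logb 2 (Fintype.card V)) := by
  have hone : ∀ u v : V, G.Adj u v → (1 : ℝ) ≤ 2 * Real.logb 2 (Fintype.card V) := by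
    intro u v huv
    have hcard : 2 ≤ Fintype.card V :=
      Fintype.one_lt_card_iff_nontrivial.mpr ⟨u, v, huv.ne⟩
    have h1 : (1 : ℝ) ≤ Real.logb 2 (Fintype.card V) := by
      rw [show (1 : ℝ) = Real.logb 2 2 by simp]
      exact Real.logb_le_logb_of_le (by norm_num) (by norm_num) (by exact_mod_cast hcard)
    linarith
  have hbot : ∀ (a : V) (c : (⊥ : SimpleGraph V).Walk a a), c.IsCycle →
      2 * Real.logb 2 (Fintype.card V) < (c.length : ℝ) := by
    intro a c hc
    cases c with
    | nil => exact absurd rfl hc.ne_nil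
    | cons h _ => exact absurd h (by simp)
  obtain ⟨-, hG, hcyc, hshort⟩ :=
    fold_main (Fintype.card V) G hone l ⊥ hl bot_le hbot
  refine ⟨hG, hcyc, ?_⟩
  intro u v huv
  rcases hcover u v huv with hm | hm
  · exact hshort (u, v) hm
  · obtain ⟨w, hw⟩ := hshort (v, u) hm
    exact ⟨w.reverse, by exact (le_of_eq (congrArg (Nat.cast (R := ℝ)) (Walk.length_reverse w))).trans hw⟩
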